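/- Let f : ℝ → ℝ be a C^k function (k < ∞ a natural number) with f(x₀) = 0. Then there exists a C^k function h : ℝ → ℝ whose zero set is exactly {x₀} and such that f^(4k+4)/h extends to a C^k function on ℝ (i.e., h divides f^(4k+4) in C^k(ℝ)). -/

import Mathlib

open Filter Topology

lemma bnd (f : ℝ → ℝ) (x₀ : ℝ) (u : ℝ → ℝ) (p q : ℕ) (hpq : q + 1 ≤ p)
    (x : ℝ) :
    |u x * (x - x₀) ^ (2 * p) / (f x ^ 2 + (x - x₀) ^ 2) ^ q| ≤ |u x| * (x - x₀) ^ (2 * (p - q)) := by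
  set a : ℝ := (x - x₀) ^ 2 with ha
  have ha0 : 0 ≤ a := sq_nonneg _
  have hpow : (x - x₀) ^ (2 * p) = a ^ p := by rw [ha, ← pow_mul]
  have hpow' : (x - x₀) ^ (2 * (p - q)) = a ^ (p - q) := by rw [ha, ← pow_mul]
  rw [hpow, hpow', abs_div, abs_mul]
  rcases eq_or_ne x x₀ with h | h
  · have : a = 0 := by simp [ha, h]
    rw [this, zero_pow (by omega : p ≠ 0), zero_pow (by omega : p - q ≠ 0)]
    simp
  · have hax : 0 < a := by
      have : x - x₀ ≠ 0 := sub_ne_zero.mpr h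
      positivity
    have hD : 0 < f x ^ 2 + a := by positivity
    have habs : |a ^ p| = a ^ p := abs_of_nonneg (by positivity)
    have habsD : |(f x ^ 2 + a) ^ q| = (f x ^ 2 + a) ^ q := abs_of_nonneg (by positivity)
    rw [habs, habsD]
    have key : a ^ p / (f x ^ 2 + a) ^ q ≤ a ^ (p - q) := by
      have h1 : a ^ p / (f x ^ 2 + a) ^ q ≤ a ^ p / a ^ q :=
        div_le_div_of_nonneg_left (by positivity) (by positivity)
          (pow_le_pow_left₀ ha0 (by nlinarith [sq_nonneg (f x)]) q)
      have h2 : a ^ p / a ^ q = a ^ (p - q) := by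
        rw [pow_sub₀ _ (ne_of_gt hax) (by omega : q ≤ p), div_eq_mul_inv]
      linarith [h1, h2.le]
    calc |u x| * a ^ p / (f x ^ 2 + a) ^ q = |u x| * (a ^ p / (f x ^ 2 + a) ^ q) := by ring
      _ ≤ |u x| * a ^ (p - q) := mul_le_mul_of_nonneg_left key (abs_nonneg _)

lemma key (k : ℕ) (f : ℝ → ℝ) (hf : ContDiff ℝ (k : ℕ∞) f) (x₀ : ℝ) (hx₀ : f x₀ = 0) :
    ∀ j : ℕ, j ≤ k → ∀ (u : ℝ → ℝ) (p q : ℕ), ContDiff ℝ (j : ℕ∞) u → q + j + 1 ≤ p →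
    ContDiff ℝ (j : ℕ∞) fun x => u x * (x - x₀) ^ (2 * p) / (f x ^ 2 + (x - x₀) ^ 2) ^ q := by
  have hDcont : Continuous fun x : ℝ => f x ^ 2 + (x - x₀) ^ 2 :=
    (hf.continuous.pow 2).add ((continuous_id.sub continuous_const).pow 2)
  have hDpos : ∀ x : ℝ, x ≠ x₀ → 0 < f x ^ 2 + (x - x₀) ^ 2 := by
    intro x hx
    have : x - x₀ ≠ 0 := sub_ne_zero.mpr hx
    positivity
  intro j
  induction j with
  | zero =>
    intro _ u p q hu hpq
    have hu0 : Continuous u := hu.continuous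
    rw [show (((0 : ℕ) : ℕ∞) : WithTop ℕ∞) = 0 by norm_cast, contDiff_zero]
    rw [continuous_iff_continuousAt]
    intro x
    rcases eq_or_ne x x₀ with h | hx
    · subst h
      have hF0 : u x * (x - x) ^ (2 * p) / (f x ^ 2 + (x - x) ^ 2) ^ q = 0 := by
        rw [sub_self, zero_pow (by omega : 2 * p ≠ 0), mul_zero, zero_div]
      unfold ContinuousAt
      simp only []
      rw [hF0]
      apply squeeze_zero_norm (a := fun z => |u z| * (z - x) ^ (2 * (p - q)))
      · intro z
        simp only [Real.norm_eq_abs]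
        exact bnd f x u p q (by omega) z
      · have hgc : Continuous fun z : ℝ => |u z| * (z - x) ^ (2 * (p - q)) :=
          hu0.abs.mul ((continuous_id.sub continuous_const).pow _)
        have := hgc.tendsto x
        simpa [sub_self, zero_pow (by omega : 2 * (p - q) ≠ 0)] using this
    · exact ((hu0.continuousAt.mul (by fun_prop)).div
        ((hDcont.pow q).continuousAt) (pow_ne_zero _ (ne_of_gt (hDpos x hx))))
  | succ j ih =>
    intro hjk u p q hu hpq
    have hjk' : j ≤ k := by omega
    have hcast : ∀ m : ℕ, (((m + 1 : ℕ) : ℕ∞) : WithTop ℕ∞) = (((m : ℕ) : ℕ∞) : WithTop ℕ∞) + 1 := by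
      intro m; push_cast; rfl
    have hle1 : ((1 : ℕ∞) : WithTop ℕ∞) ≤ (((j + 1 : ℕ) : ℕ∞) : WithTop ℕ∞) := by
      exact_mod_cast (by omega : 1 ≤ j + 1)
    have hlek : ((1 : ℕ∞) : WithTop ℕ∞) ≤ (((k : ℕ) : ℕ∞) : WithTop ℕ∞) := by
      exact_mod_cast (by omega : 1 ≤ k)
    have hud : Differentiable ℝ u := hu.differentiable (by exact_mod_cast (by omega : j + 1 ≠ 0))
    have hfd : Differentiable ℝ f := hf.differentiable (by exact_mod_cast (by omega : k ≠ 0))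
    have hu' : ContDiff ℝ ((j : ℕ) : ℕ∞) (deriv u) :=
      (contDiff_succ_iff_deriv.mp (hcast j ▸ hu)).2.2
    have hfj1 : ContDiff ℝ (((j + 1 : ℕ) : ℕ∞)) f := hf.of_le (by exact_mod_cast hjk)
    have hf' : ContDiff ℝ ((j : ℕ) : ℕ∞) (deriv f) :=
      (contDiff_succ_iff_deriv.mp (hcast j ▸ hfj1)).2.2
    have huj : ContDiff ℝ ((j : ℕ) : ℕ∞) u := hu.of_le (by exact_mod_cast Nat.le_succ j)
    have hfj : ContDiff ℝ ((j : ℕ) : ℕ∞) f := hf.of_le (by exact_mod_cast hjk')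
    have hG : ∀ x, HasDerivAt (fun y => u y * (y - x₀) ^ (2 * p) / (f y ^ 2 + (y - x₀) ^ 2) ^ q)
        (deriv u x * (x - x₀) ^ (2 * p) / (f x ^ 2 + (x - x₀) ^ 2) ^ q
          + (2 * (p : ℝ) * u x * (x - x₀)) * (x - x₀) ^ (2 * (p - 1)) / (f x ^ 2 + (x - x₀) ^ 2) ^ q
          + (-(q : ℝ) * u x * (2 * f x * deriv f x + 2 * (x - x₀))) * (x - x₀) ^ (2 * p)
              / (f x ^ 2 + (x - x₀) ^ 2) ^ (q + 1)) x := by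
      intro x
      rcases eq_or_ne x x₀ with h | hx
      · subst h
        have h0 : HasDerivAt (fun y => u y * (y - x) ^ (2 * p) / (f y ^ 2 + (y - x) ^ 2) ^ q)
            0 x := by
          rw [hasDerivAt_iff_tendsto_slope]
          have hF0 : u x * (x - x) ^ (2 * p) / (f x ^ 2 + (x - x) ^ 2) ^ q = 0 := by
            rw [sub_self, zero_pow (by omega : 2 * p ≠ 0), mul_zero, zero_div]
          apply squeeze_zero_norm (a := fun z => |u z| * |z - x| ^ (2 * (p - q) - 1))
          · intro z
            rcases eq_or_ne z x with h' | hz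
            · subst h'
              rw [slope_same]
              simp only [norm_zero]
              positivity
            · rw [slope_def_field, hF0, sub_zero, Real.norm_eq_abs, abs_div]
              have hb := bnd f x u p q (by omega) z
              have hzx : |z - x| ≠ 0 := abs_ne_zero.mpr (sub_ne_zero.mpr hz)
              have heq : (z - x) ^ (2 * (p - q)) = |z - x| ^ (2 * (p - q)) := by
                rw [pow_abs, abs_of_nonneg ((even_two_mul _).pow_nonneg _)]
              calc |u z * (z - x) ^ (2 * p) / (f z ^ 2 + (z - x) ^ 2) ^ q| / |z - x|
                  ≤ (|u z| * (z - x) ^ (2 * (p - q))) / |z - x| := by gcongr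
                _ = |u z| * |z - x| ^ (2 * (p - q) - 1) := by
                    rw [heq, mul_div_assoc,
                      pow_sub₀ _ hzx (by omega : 1 ≤ 2 * (p - q)), pow_one, div_eq_mul_inv]
          · have hgc : Continuous fun z : ℝ => |u z| * |z - x| ^ (2 * (p - q) - 1) :=
              hu.continuous.abs.mul (((continuous_id.sub continuous_const).abs).pow _)
            have h1 : Tendsto (fun z : ℝ => |u z| * |z - x| ^ (2 * (p - q) - 1)) (𝓝[≠] x)
                (𝓝 (|u x| * |x - x| ^ (2 * (p - q) - 1))) :=
              (hgc.tendsto x).mono_left nhdsWithin_le_nhds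
            simpa [sub_self, zero_pow (by omega : 2 * (p - q) - 1 ≠ 0)] using h1
        convert h0 using 2
        rw [sub_self]
        simp [zero_pow (by omega : 2 * p ≠ 0), zero_pow (by omega : 2 * (p - 1) ≠ 0)]
      · have hDne : f x ^ 2 + (x - x₀) ^ 2 ≠ 0 := ne_of_gt (hDpos x hx)
        have hsub : HasDerivAt (fun y : ℝ => y - x₀) 1 x := (hasDerivAt_id x).sub_const x₀
        have hnum := (hud x).hasDerivAt.mul (hsub.pow (2 * p))
        have hD : HasDerivAt (fun y => f y ^ 2 + (y - x₀) ^ 2)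
            (2 * f x * deriv f x + 2 * (x - x₀)) x := by
          have h1 := ((hfd x).hasDerivAt.pow 2).add (hsub.pow 2)
          refine h1.congr_deriv ?_
          push_cast
          ring
        have hdiv := hnum.div (hD.pow q) (pow_ne_zero q hDne)
        refine hdiv.congr_deriv ?_
        simp only [Pi.pow_apply, Pi.mul_apply]
        obtain ⟨p', rfl⟩ : ∃ p', p = p' + 1 := ⟨p - 1, by omega⟩
        simp only [show 2 * (p' + 1) - 1 = 2 * p' + 1 from by omega, Nat.add_sub_cancel]
        rcases q with _ | q'
        · push_cast
          field_simp
          ring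
        · simp only [Nat.add_sub_cancel]
          push_cast
          field_simp
          ring
    have hdiff : Differentiable ℝ
        (fun x => u x * (x - x₀) ^ (2 * p) / (f x ^ 2 + (x - x₀) ^ 2) ^ q) :=
      fun x => (hG x).differentiableAt
    have hder : deriv (fun x => u x * (x - x₀) ^ (2 * p) / (f x ^ 2 + (x - x₀) ^ 2) ^ q)
        = fun x => deriv u x * (x - x₀) ^ (2 * p) / (f x ^ 2 + (x - x₀) ^ 2) ^ q
          + (2 * (p : ℝ) * u x * (x - x₀)) * (x - x₀) ^ (2 * (p - 1)) / (f x ^ 2 + (x - x₀) ^ 2) ^ q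
          + (-(q : ℝ) * u x * (2 * f x * deriv f x + 2 * (x - x₀))) * (x - x₀) ^ (2 * p)
              / (f x ^ 2 + (x - x₀) ^ 2) ^ (q + 1) :=
      funext fun x => (hG x).deriv
    rw [hcast j]
    refine contDiff_succ_iff_deriv.mpr ⟨hdiff, ?_, ?_⟩
    · intro habs
      exfalso
      exact (by simp : (((j : ℕ) : ℕ∞) : WithTop ℕ∞) ≠ ⊤) habs
    · rw [hder]
      refine ContDiff.add (ContDiff.add ?_ ?_) ?_
      · exact ih hjk' (fun x => deriv u x) p q hu' (by omega)
      · exact ih hjk' (fun x => 2 * (p : ℝ) * u x * (x - x₀)) (p - 1) q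
          (((contDiff_const.mul huj).mul (contDiff_id.sub contDiff_const))) (by omega)
      · exact ih hjk' (fun x => -(q : ℝ) * u x * (2 * f x * deriv f x + 2 * (x - x₀))) p (q + 1)
          ((contDiff_const.mul huj).mul
            (((contDiff_const.mul hfj).mul hf').add
              (contDiff_const.mul (contDiff_id.sub contDiff_const)))) (by omega)

theorem stmt_1 (k : ℕ) (f : ℝ → ℝ) (hf : ContDiff ℝ (k : ℕ∞) f)
    (x₀ : ℝ) (hx₀ : f x₀ = 0) :
    ∃ h : ℝ → ℝ, ContDiff ℝ (k : ℕ∞) h ∧ {x : ℝ | h x = 0} = {x₀} ∧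
      ∃ g : ℝ → ℝ, ContDiff ℝ (k : ℕ∞) g ∧ ∀ x : ℝ, (f x) ^ (4 * k + 4) = g x * h x := by
  refine ⟨fun x => f x ^ 2 + (x - x₀) ^ 2, ?_, ?_, ?_⟩
  · exact (hf.pow 2).add ((contDiff_id.sub contDiff_const).pow 2)
  · ext x
    simp only [Set.mem_setOf_eq, Set.mem_singleton_iff]
    constructor
    · intro hx
      have h2 : (x - x₀) ^ 2 = 0 := by nlinarith [sq_nonneg (f x), sq_nonneg (x - x₀)]
      have := pow_eq_zero_iff (two_ne_zero) |>.mp h2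
      exact sub_eq_zero.mp this
    · rintro rfl
      rw [hx₀]
      ring
  · refine ⟨fun x => (∑ i ∈ Finset.range (2 * k + 2),
        (f x ^ 2) ^ i * (-(x - x₀) ^ 2) ^ (2 * k + 2 - 1 - i))
        + (1 : ℝ) * (x - x₀) ^ (2 * (2 * k + 2)) / (f x ^ 2 + (x - x₀) ^ 2) ^ 1, ?_, ?_⟩
    · apply ContDiff.add
      · exact ContDiff.sum fun i _ =>
          ((hf.pow 2).pow i).mul (((contDiff_id.sub contDiff_const).pow 2).neg.pow _)
      · exact key k f hf x₀ hx₀ k le_rfl (fun _ => (1 : ℝ)) (2 * k + 2) 1 contDiff_const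
          (by omega)
    · intro x
      have hr : (1 : ℝ) * (x - x₀) ^ (2 * (2 * k + 2)) / (f x ^ 2 + (x - x₀) ^ 2) ^ 1
          * (f x ^ 2 + (x - x₀) ^ 2) = (x - x₀) ^ (2 * (2 * k + 2)) := by
        rcases eq_or_ne x x₀ with h | h
        · rw [h, sub_self, zero_pow (by omega : 2 * (2 * k + 2) ≠ 0)]
          ring
        · have hD : f x ^ 2 + (x - x₀) ^ 2 ≠ 0 := by
            have : x - x₀ ≠ 0 := sub_ne_zero.mpr h
            positivity
          field_simp
      rw [add_mul, hr]
      have hg : (∑ i ∈ Finset.range (2 * k + 2),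
          (f x ^ 2) ^ i * (-(x - x₀) ^ 2) ^ (2 * k + 2 - 1 - i)) * (f x ^ 2 + (x - x₀) ^ 2)
          = (f x ^ 2) ^ (2 * k + 2) - (-(x - x₀) ^ 2) ^ (2 * k + 2) := by
        have := geom_sum₂_mul (f x ^ 2) (-(x - x₀) ^ 2) (2 * k + 2)
        rw [sub_neg_eq_add] at this
        exact this
      rw [hg, Even.neg_pow ⟨k + 1, by omega⟩, ← pow_mul, ← pow_mul]
      have e1 : 2 * (2 * k + 2) = 4 * k + 4 := by omega
      rw [e1]
      ring
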